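/- For all complex numbers a, b with a ≠ b and all real p > 1, one has Re((|b|^{p-2}b − |a|^{p-2}a)·conj(b−a)) > 0. -/

import Mathlib

theorem re_pos (p : ℝ) (hp : 1 < p) (a b : ℂ) (hab : a ≠ b) :
    0 < (((‖b‖ ^ (p - 2) : ℝ) * b - (‖a‖ ^ (p - 2) : ℝ) * a) *
        (starRingEnd ℂ) (b - a)).re := by
  set r := ‖a‖ with hr
  set s := ‖b‖ with hs
  set ca := r ^ (p - 2) with hca
  set cb := s ^ (p - 2) with hcb
  set t := (b * (starRingEnd ℂ) a).re with ht
  have key : (((cb : ℂ) * b - (ca : ℂ) * a) * (starRingEnd ℂ) (b - a)).re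
      = cb * s ^ 2 + ca * r ^ 2 - (cb + ca) * t := by
    have hs2 : s ^ 2 = Complex.normSq b := Complex.sq_norm b
    have hr2 : r ^ 2 = Complex.normSq a := Complex.sq_norm a
    simp only [ht, Complex.mul_re, Complex.mul_im, Complex.sub_re, Complex.sub_im,
      Complex.conj_re, Complex.conj_im, Complex.ofReal_re, Complex.ofReal_im, hs2, hr2,
      Complex.normSq_apply]
    ring
  rw [key]
  have hr0 : 0 ≤ r := norm_nonneg a
  have hs0 : 0 ≤ s := norm_nonneg b
  have hca0 : 0 ≤ ca := Real.rpow_nonneg hr0 _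
  have hcb0 : 0 ≤ cb := Real.rpow_nonneg hs0 _
  have htle : t ≤ s * r := by
    calc t ≤ ‖b * (starRingEnd ℂ) a‖ := Complex.re_le_norm _
    _ = s * r := by rw [norm_mul, Complex.norm_conj]
  -- key algebraic identity helper: c * s = s ^ (p-1) style
  have hmul : ∀ x : ℝ, 0 ≤ x → x ^ (p - 2) * x = x ^ (p - 1) := by
    intro x hx
    rcases eq_or_lt_of_le hx with h | h
    · rw [← h, mul_zero, Real.zero_rpow (by intro h0; linarith : p - 1 ≠ 0)]
    · rw [← Real.rpow_add_one h.ne' (p - 2)]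
      ring_nf
  rcases eq_or_ne r s with hrs | hrs
  · -- r = s, both positive (else a = b = 0)
    have hspos : 0 < s := by
      rcases eq_or_lt_of_le hs0 with h | h
      · exfalso
        have hs0' : ‖b‖ = 0 := by rw [← hs, ← h]
        have hr0' : ‖a‖ = 0 := by rw [← hr, hrs, ← h]
        exact hab ((norm_eq_zero.mp hr0').trans (norm_eq_zero.mp hs0').symm)
      · exact h
    have hcbpos : 0 < cb := Real.rpow_pos_of_pos hspos _
    have htlt : t < s * r := by
      rcases lt_or_eq_of_le htle with h | h
      · exact h
      · exfalso
        -- t = s * r forces b * conj a = (s*r : ℝ), hence b = a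
        set z := b * (starRingEnd ℂ) a with hz
        have habs : ‖z‖ = s * r := by rw [hz, norm_mul, Complex.norm_conj]
        have him : z.im = 0 := by
          have h1 : z.re ^ 2 + z.im ^ 2 = (s * r) ^ 2 := by
            rw [← habs, Complex.sq_norm, Complex.normSq_apply]; ring
          have h2 : z.re = s * r := h
          have h3 : z.im ^ 2 = 0 := by
            have h4 : z.re ^ 2 = (s * r) ^ 2 := by rw [h2]
            linarith
          exact pow_eq_zero_iff two_ne_zero |>.mp h3
        have hzeq : z = ((s * r : ℝ) : ℂ) := by
          apply Complex.ext
          · simpa using h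
          · simpa using him
        have hra : ((r : ℝ) : ℂ) * ((r : ℝ) : ℂ) = a * (starRingEnd ℂ) a := by
          rw [Complex.mul_conj]
          rw [← Complex.sq_norm, ← hr]
          push_cast
          ring
        have hzeq2 : b * (starRingEnd ℂ) a = a * (starRingEnd ℂ) a := by
          rw [← hz, hzeq, hrs, ← hra]
          push_cast
          rw [hrs]
        have hane : (starRingEnd ℂ) a ≠ 0 := by
          simp only [ne_eq, map_eq_zero]
          intro h0
          rw [h0, norm_zero] at hr
          rw [hr] at hrs
          exact hspos.ne (hrs ▸ rfl)
        have := mul_right_cancel₀ hane hzeq2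
        exact hab this.symm
    have : cb * s ^ 2 + ca * r ^ 2 - (cb + ca) * t = (cb + ca) * (s * r - t) := by
      rw [hca, hcb, hrs]; ring
    rw [this]
    have : 0 < cb + ca := by positivity
    nlinarith
  · -- r ≠ s
    have hstep : cb * s ^ 2 + ca * r ^ 2 - (cb + ca) * (s * r)
        = (s - r) * (s ^ (p - 1) - r ^ (p - 1)) := by
      rw [← hmul s hs0, ← hmul r hr0, ← hcb, ← hca]; ring
    have hpos : 0 < (s - r) * (s ^ (p - 1) - r ^ (p - 1)) := by
      rcases lt_or_gt_of_ne hrs with h | h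
      · have := Real.rpow_lt_rpow hr0 h (by linarith : (0:ℝ) < p - 1)
        nlinarith
      · have := Real.rpow_lt_rpow hs0 h (by linarith : (0:ℝ) < p - 1)
        nlinarith
    nlinarith [mul_le_mul_of_nonneg_left htle (by positivity : (0:ℝ) ≤ cb + ca)]
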